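/- Under a uniformly random injective hash of a finite ground set into the reals with continuous i.i.d. values, P(max_{v∈A} h(v) = max_{v∈B} h(v)) = |A∩B|/|A∪B| for finite nonempty sets A, B. -/

import Mathlib

open MeasureTheory ProbabilityTheory

noncomputable def unifM : Measure ℝ := volume.restrict (Set.Icc (0:ℝ) 1)

instance : IsProbabilityMeasure unifM :=
  ⟨by simp [unifM, Real.volume_Icc]⟩

lemma unifM_Iic (t : ℝ) : unifM (Set.Iic t) = ENNReal.ofReal (min t 1) := by
  have hset : Set.Iic t ∩ Set.Icc (0:ℝ) 1 = Set.Icc 0 (min t 1) := by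
    ext x
    simp only [Set.mem_inter_iff, Set.mem_Iic, Set.mem_Icc, le_min_iff]
    tauto
  rw [unifM, Measure.restrict_apply measurableSet_Iic, hset, Real.volume_Icc]
  simp

lemma unifM_singleton (a : ℝ) : unifM {a} = 0 := by
  rw [unifM, Measure.restrict_apply (measurableSet_singleton a)]
  exact measure_mono_null Set.inter_subset_left Real.volume_singleton

lemma map_eq_unifM {Ω : Type*} [MeasureSpace Ω] [IsProbabilityMeasure (ℙ : Measure Ω)]
    {X : Ω → ℝ} (hX : Measurable X)
    (hcdf : ∀ t ∈ Set.Icc (0:ℝ) 1, ℙ {ω | X ω ≤ t} = ENNReal.ofReal t) :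
    Measure.map X ℙ = unifM := by
  have : IsProbabilityMeasure (Measure.map X ℙ) := Measure.isProbabilityMeasure_map hX.aemeasurable
  refine Measure.ext_of_Iic _ _ (fun t => ?_)
  rw [Measure.map_apply hX measurableSet_Iic, unifM_Iic]
  have hpre : X ⁻¹' Set.Iic t = {ω | X ω ≤ t} := rfl
  rcases lt_or_ge t 0 with ht | ht
  · have h0 := hcdf 0 ⟨le_refl 0, zero_le_one⟩
    have hle : ℙ (X ⁻¹' Set.Iic t) ≤ ℙ {ω | X ω ≤ 0} :=
      measure_mono fun ω hω => le_trans hω ht.le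
    rw [h0, ENNReal.ofReal_zero, le_zero_iff] at hle
    rw [hle]
    rw [min_eq_left (ht.le.trans zero_le_one), eq_comm, ENNReal.ofReal_eq_zero]
    exact ht.le
  · rcases le_or_gt t 1 with ht1 | ht1
    · rw [min_eq_left ht1]
      exact hcdf t ⟨ht, ht1⟩
    · have h1 := hcdf 1 ⟨zero_le_one, le_refl 1⟩
      have hge : ℙ {ω | X ω ≤ 1} ≤ ℙ (X ⁻¹' Set.Iic t) :=
        measure_mono fun ω hω => le_trans hω ht1.le
      rw [h1, ENNReal.ofReal_one] at hge
      rw [min_eq_right ht1.le, ENNReal.ofReal_one]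
      exact le_antisymm prob_le_one hge

def Emax {ι : Type*} (v : ι) : Set (ι → ℝ) := {x | ∀ u, u ≠ v → x u < x v}

lemma measurableSet_Emax {ι : Type*} [Countable ι] (v : ι) : MeasurableSet (Emax v) := by
  have : Emax v = ⋂ u, ⋂ (_ : u ≠ v), {x : ι → ℝ | x u < x v} := by
    ext x; simp [Emax]
  rw [this]
  exact .iInter fun u => .iInter fun _ =>
    measurableSet_lt (measurable_pi_apply u) (measurable_pi_apply v)

lemma Emax_disjoint {ι : Type*} {v w : ι} (hvw : v ≠ w) : Disjoint (Emax v) (Emax w) := by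
  rw [Set.disjoint_left]
  rintro x hv hw
  exact lt_asymm (hv w fun hh => hvw hh.symm) (hw v hvw)

lemma pi_Emax_eq {ι : Type*} [Fintype ι] [DecidableEq ι] (v w : ι) :
    Measure.pi (fun _ : ι => unifM) (Emax v) = Measure.pi (fun _ : ι => unifM) (Emax w) := by
  set e : ι ≃ ι := Equiv.swap v w with he
  have hmp : MeasurePreserving (MeasurableEquiv.piCongrLeft (fun _ : ι => ℝ) e)
      (Measure.pi fun _ : ι => unifM) (Measure.pi fun _ : ι => unifM) :=
    measurePreserving_piCongrLeft (fun _ : ι => unifM) e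
  have hpre : (MeasurableEquiv.piCongrLeft (fun _ : ι => ℝ) e) ⁻¹' (Emax v) = Emax w := by
    ext x
    simp only [Set.mem_preimage, Emax, Set.mem_setOf_eq,
      MeasurableEquiv.coe_piCongrLeft]
    have hkey : ∀ i : ι, (Equiv.piCongrLeft (fun _ : ι => ℝ) e) x (e i) = x i := fun i =>
      Equiv.piCongrLeft_apply_apply (fun _ : ι => ℝ) e x i
    have hev : e w = v := Equiv.swap_apply_right v w
    constructor
    · intro hx u hu
      have h1 : e u ≠ v := by
        rw [← hev]; exact fun hh => hu (e.injective hh)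
      have := hx (e u) h1
      rwa [hkey u, ← hev, hkey w] at this
    · intro hx u hu
      have hu' : e u ≠ w := by
        intro hh
        apply hu
        have : e (e u) = e w := by rw [hh]
        rwa [Equiv.swap_apply_self, hev] at this
      have := hx (e u) hu'
      have h2 : (Equiv.piCongrLeft (fun _ : ι => ℝ) e) x u = x (e u) := by
        conv_lhs => rw [show u = e (e u) from (Equiv.swap_apply_self v w u).symm]
        exact hkey (e u)
      rw [h2, show v = e w from hev.symm, hkey w]
      exact this
  calc Measure.pi (fun _ : ι => unifM) (Emax v)
      = Measure.pi (fun _ : ι => unifM)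
        ((MeasurableEquiv.piCongrLeft (fun _ : ι => ℝ) e) ⁻¹' (Emax v)) :=
        (hmp.measure_preimage (measurableSet_Emax v).nullMeasurableSet).symm
    _ = _ := by rw [hpre]

lemma sup'_attach_val {α β : Type*} [SemilatticeSup β] (s : Finset α) (H : s.Nonempty)
    (f : α → β) :
    s.attach.sup' (Finset.attach_nonempty_iff.2 H) (fun a => f a.1) = s.sup' H f := by
  apply le_antisymm
  · exact Finset.sup'_le _ _ fun a _ => Finset.le_sup' f a.2
  · exact Finset.sup'_le _ _ fun a ha =>
      Finset.le_sup' (fun a : {x // x ∈ s} => f a.1) (Finset.mem_attach s ⟨a, ha⟩)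

/-- With i.i.d. Uniform(0,1) (hence a.s. tie-free) hash values on the ground set,
`P(max_{v∈A} h(v) = max_{v∈B} h(v)) = |A ∩ B| / |A ∪ B|` for finite nonempty `A, B`. -/
theorem max_hash_collision_prob {Ω : Type*} [MeasureSpace Ω]
    [IsProbabilityMeasure (ℙ : Measure Ω)]
    {I : Type*} [DecidableEq I] (A B : Finset I) (hA : A.Nonempty) (hB : B.Nonempty)
    (h : I → Ω → ℝ) (hmeas : ∀ v, Measurable (h v))
    (hunif : ∀ v ∈ A ∪ B, ∀ t ∈ Set.Icc (0 : ℝ) 1, ℙ {ω | h v ω ≤ t} = ENNReal.ofReal t)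
    (hind : iIndepFun
      (fun v : ((A ∪ B : Finset I) : Type _) => h v.1) ℙ) :
    ℙ {ω | A.sup' hA (fun v => h v ω) = B.sup' hB (fun v => h v ω)}
      = ((A ∩ B).card : ENNReal) / ((A ∪ B).card : ENNReal) := by
  classical
  set S : Finset I := A ∪ B with hS
  have hAS : A ⊆ S := Finset.subset_union_left
  have hBS : B ⊆ S := Finset.subset_union_right
  haveI : Nonempty ↥S := ⟨⟨hA.choose, hAS hA.choose_spec⟩⟩
  set X : Ω → (↥S → ℝ) := fun ω v => h v.1 ω with hXdef
  have hXmeas : Measurable X := measurable_pi_lambda _ fun v => hmeas v.1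
  have hmarg : ∀ v : ↥S, Measure.map (h v.1) ℙ = unifM := fun v =>
    map_eq_unifM (hmeas v.1) (hunif v.1 v.2)
  set P : Measure (↥S → ℝ) := Measure.pi (fun _ : ↥S => unifM) with hPdef
  -- the joint law is the product of uniforms
  have hlaw : Measure.map X ℙ = P := by
    rw [hPdef]
    refine (Measure.pi_eq (μ := fun _ : ↥S => unifM) fun s hs => ?_).symm
    rw [Measure.map_apply hXmeas (MeasurableSet.univ_pi hs)]
    have hpre : X ⁻¹' Set.pi Set.univ s = ⋂ v ∈ (Finset.univ : Finset ↥S), h v.1 ⁻¹' s v := by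
      ext ω; simp [X, Set.mem_pi]
    rw [hpre, hind.measure_inter_preimage_eq_mul Finset.univ (fun v _ => hs v)]
    exact Finset.prod_congr rfl fun v _ => by
      rw [← hmarg v, Measure.map_apply (hmeas v.1) (hs v)]
  have htransport : ∀ T : Set (↥S → ℝ), MeasurableSet T → P T = ℙ (X ⁻¹' T) := by
    intro T hT
    rw [← hlaw, Measure.map_apply hXmeas hT]
  haveI : IsProbabilityMeasure P := by
    rw [hPdef]; infer_instance
  -- ties are null
  have hdiag : MeasurableSet {p : ℝ × ℝ | p.1 = p.2} :=
    measurableSet_eq_fun measurable_fst measurable_snd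
  have hties : ∀ v w : ↥S, v ≠ w → P {x : ↥S → ℝ | x v = x w} = 0 := by
    intro v w hvw
    have hmset : MeasurableSet {x : ↥S → ℝ | x v = x w} :=
      measurableSet_eq_fun (measurable_pi_apply v) (measurable_pi_apply w)
    rw [htransport _ hmset]
    have hIF : IndepFun (h v.1) (h w.1) ℙ := hind.indepFun hvw
    have hmapeq := (indepFun_iff_map_prod_eq_prod_map_map
      (hmeas v.1).aemeasurable (hmeas w.1).aemeasurable).mp hIF
    have hpre : X ⁻¹' {x : ↥S → ℝ | x v = x w}
        = (fun ω => (h v.1 ω, h w.1 ω)) ⁻¹' {p : ℝ × ℝ | p.1 = p.2} := rfl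
    rw [hpre, ← Measure.map_apply ((hmeas v.1).prodMk (hmeas w.1)) hdiag, hmapeq,
      hmarg v, hmarg w, Measure.prod_apply hdiag]
    have hzero : ∀ a : ℝ, unifM (Prod.mk a ⁻¹' {p : ℝ × ℝ | p.1 = p.2}) = 0 := by
      intro a
      have : Prod.mk a ⁻¹' {p : ℝ × ℝ | p.1 = p.2} = {a} := by
        ext b; simp [eq_comm]
      rw [this, unifM_singleton]
    simp only [hzero]
    simp [unifM_singleton]
  -- the tie set
  set N : Set (↥S → ℝ) := ⋃ v, ⋃ w, ⋃ (_ : v ≠ w), {x : ↥S → ℝ | x v = x w} with hNdef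
  have hNmeas : MeasurableSet N :=
    .iUnion fun v => .iUnion fun w => .iUnion fun _ =>
      measurableSet_eq_fun (measurable_pi_apply v) (measurable_pi_apply w)
  have hNnull : P N = 0 :=
    measure_iUnion_null fun v => measure_iUnion_null fun w => measure_iUnion_null fun hvw =>
      hties v w hvw
  have hNc : ∀ x : ↥S → ℝ, x ∉ N → ∀ v w : ↥S, v ≠ w → x v ≠ x w := by
    intro x hx v w hvw
    intro heq
    exact hx (Set.mem_iUnion.2 ⟨v, Set.mem_iUnion.2 ⟨w, Set.mem_iUnion.2 ⟨hvw, heq⟩⟩⟩)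
  -- complement of ties is covered by the strict-max events
  have hcover : Nᶜ ⊆ ⋃ v : ↥S, Emax v := by
    intro x hx
    obtain ⟨v, -, hv⟩ := Finset.exists_max_image (Finset.univ : Finset ↥S) x
      Finset.univ_nonempty
    refine Set.mem_iUnion.2 ⟨v, fun u hu => ?_⟩
    exact lt_of_le_of_ne (hv u (Finset.mem_univ u)) (hNc x hx u v hu)
  -- all strict-max events have the same probability c, and they sum to 1
  set c : ENNReal := P (Emax (Classical.arbitrary ↥S)) with hcdef
  have hcall : ∀ v : ↥S, P (Emax v) = c := fun v => pi_Emax_eq v _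
  have hsum1 : (((Finset.univ : Finset ↥S)).card : ENNReal) * c = 1 := by
    have hdisj : Pairwise (Function.onFun Disjoint fun v : ↥S => Emax v) :=
      fun v w hvw => Emax_disjoint hvw
    have hUeq : P (⋃ v : ↥S, Emax v) = ∑ v : ↥S, P (Emax v) := by
      rw [measure_iUnion hdisj fun v => measurableSet_Emax v, tsum_fintype]
    have hone : P (⋃ v : ↥S, Emax v) = 1 := by
      refine le_antisymm prob_le_one ?_
      have h1 : P Nᶜ = 1 := by
        rw [measure_compl hNmeas (measure_ne_top P N), hNnull, measure_univ, tsub_zero]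
      calc (1 : ENNReal) = P Nᶜ := h1.symm
        _ ≤ P (⋃ v : ↥S, Emax v) := measure_mono hcover
    rw [← hone, hUeq]
    rw [Finset.sum_congr rfl fun v _ => hcall v, Finset.sum_const, nsmul_eq_mul]
  -- the target event
  have hAatt : A.attach.Nonempty := Finset.attach_nonempty_iff.2 hA
  have hBatt : B.attach.Nonempty := Finset.attach_nonempty_iff.2 hB
  set fA : (↥S → ℝ) → ℝ := fun x => A.attach.sup' hAatt fun a => x ⟨a.1, hAS a.2⟩ with hfAdef
  set fB : (↥S → ℝ) → ℝ := fun x => B.attach.sup' hBatt fun b => x ⟨b.1, hBS b.2⟩ with hfBdef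
  have hfAmeas : Measurable fA := by
    have hm := Finset.measurable_sup' hAatt
      (f := fun (a : {x // x ∈ A}) (x : ↥S → ℝ) => x ⟨a.1, hAS a.2⟩)
      (fun a _ => measurable_pi_apply _)
    have : fA = A.attach.sup' hAatt fun (a : {x // x ∈ A}) (x : ↥S → ℝ) => x ⟨a.1, hAS a.2⟩ := by
      funext x; rw [Finset.sup'_apply]
    rwa [this]
  have hfBmeas : Measurable fB := by
    have hm := Finset.measurable_sup' hBatt
      (f := fun (b : {x // x ∈ B}) (x : ↥S → ℝ) => x ⟨b.1, hBS b.2⟩)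
      (fun b _ => measurable_pi_apply _)
    have : fB = B.attach.sup' hBatt fun (b : {x // x ∈ B}) (x : ↥S → ℝ) => x ⟨b.1, hBS b.2⟩ := by
      funext x; rw [Finset.sup'_apply]
    rwa [this]
  set T : Set (↥S → ℝ) := {x | fA x = fB x} with hTdef
  have hTmeas : MeasurableSet T := measurableSet_eq_fun hfAmeas hfBmeas
  have hAe : ∀ ω, fA (X ω) = A.sup' hA fun v => h v ω := fun ω =>
    sup'_attach_val A hA (fun v => h v ω)
  have hBe : ∀ ω, fB (X ω) = B.sup' hB fun v => h v ω := fun ω =>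
    sup'_attach_val B hB (fun v => h v ω)
  have hevent : {ω | A.sup' hA (fun v => h v ω) = B.sup' hB (fun v => h v ω)} = X ⁻¹' T := by
    ext ω
    show (A.sup' hA fun v => h v ω) = (B.sup' hB fun v => h v ω) ↔ fA (X ω) = fB (X ω)
    rw [hAe ω, hBe ω]
  -- the index finset for A ∩ B
  set K : Finset ↥S := Finset.univ.filter (fun v : ↥S => v.1 ∈ A ∩ B) with hKdef
  have hKcard : K.card = (A ∩ B).card := by
    refine Finset.card_bij (fun v _ => v.1) ?_ ?_ ?_
    · intro v hv; exact (Finset.mem_filter.1 hv).2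
    · intro v hv w hw hvw; exact Subtype.ext hvw
    · intro b hb
      have hbS : b ∈ S := hAS (Finset.mem_inter.1 hb).1
      exact ⟨⟨b, hbS⟩, Finset.mem_filter.2 ⟨Finset.mem_univ _, hb⟩, rfl⟩
  -- U ⊆ T
  have hUsubT : (⋃ v ∈ K, Emax v) ⊆ T := by
    intro x hx
    obtain ⟨v, hvK, hvE⟩ := Set.mem_iUnion₂.1 hx
    obtain ⟨hvA, hvB⟩ := Finset.mem_inter.1 (Finset.mem_filter.1 hvK).2
    have hle : ∀ (C : Finset I) (hC : C.attach.Nonempty) (hCS : C ⊆ S), v.1 ∈ C →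
        C.attach.sup' hC (fun a => x ⟨a.1, hCS a.2⟩) = x v := by
      intro C hC hCS hvC
      refine le_antisymm (Finset.sup'_le _ _ fun a _ => ?_) ?_
      · by_cases hav : (⟨a.1, hCS a.2⟩ : ↥S) = v
        · rw [hav]
        · exact (hvE _ hav).le
      · have := Finset.le_sup' (fun a : {x // x ∈ C} => x ⟨a.1, hCS a.2⟩)
          (Finset.mem_attach C ⟨v.1, hvC⟩)
        exact this
    show fA x = fB x
    rw [hfAdef, hfBdef]
    simp only
    rw [hle A hAatt hAS hvA, hle B hBatt hBS hvB]
  -- T ⊆ U ∪ N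
  have hTsubUN : T ⊆ (⋃ v ∈ K, Emax v) ∪ N := by
    intro x hxT
    by_cases hxN : x ∈ N
    · exact Or.inr hxN
    refine Or.inl ?_
    have hne := hNc x hxN
    obtain ⟨a, haA, ha⟩ := Finset.exists_mem_eq_sup' hAatt
      (fun a : {x // x ∈ A} => x ⟨a.1, hAS a.2⟩)
    obtain ⟨b, hbB, hb⟩ := Finset.exists_mem_eq_sup' hBatt
      (fun b : {x // x ∈ B} => x ⟨b.1, hBS b.2⟩)
    have hxab : x ⟨a.1, hAS a.2⟩ = x ⟨b.1, hBS b.2⟩ := by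
      rw [← ha, ← hb]; exact hxT
    have hab : (⟨a.1, hAS a.2⟩ : ↥S) = ⟨b.1, hBS b.2⟩ := by
      by_contra hcon
      exact hne _ _ hcon hxab
    set v : ↥S := ⟨a.1, hAS a.2⟩ with hvdef
    have hvA : v.1 ∈ A := a.2
    have hvB : v.1 ∈ B := by rw [hab]; exact b.2
    refine Set.mem_iUnion₂.2 ⟨v, Finset.mem_filter.2 ⟨Finset.mem_univ _,
      Finset.mem_inter.2 ⟨hvA, hvB⟩⟩, ?_⟩
    intro u hu
    refine lt_of_le_of_ne ?_ (hne u v hu)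
    have huS : u.1 ∈ A ∪ B := u.2
    rcases Finset.mem_union.1 huS with huA | huB
    · have hle := Finset.le_sup' (fun a : {x // x ∈ A} => x ⟨a.1, hAS a.2⟩)
        (Finset.mem_attach A ⟨u.1, huA⟩)
      rw [ha] at hle
      simpa using hle
    · have hle := Finset.le_sup' (fun b : {x // x ∈ B} => x ⟨b.1, hBS b.2⟩)
        (Finset.mem_attach B ⟨u.1, huB⟩)
      rw [hb] at hle
      have : x ⟨u.1, hBS huB⟩ ≤ x ⟨b.1, hBS b.2⟩ := by simpa using hle
      calc x u = x ⟨u.1, hBS huB⟩ := rfl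
        _ ≤ x ⟨b.1, hBS b.2⟩ := this
        _ = x v := by rw [hab.symm]
  -- compute P T
  have hUmeas : ∀ v ∈ K, MeasurableSet (Emax v : Set (↥S → ℝ)) := fun v _ => measurableSet_Emax v
  have hPU : P (⋃ v ∈ K, Emax v) = (K.card : ENNReal) * c := by
    rw [measure_biUnion_finset ?_ hUmeas]
    · rw [Finset.sum_congr rfl fun v _ => hcall v, Finset.sum_const, nsmul_eq_mul]
    · intro v _ w _ hvw
      exact Emax_disjoint hvw
  have hPT : P T = (K.card : ENNReal) * c := by
    refine le_antisymm ?_ ?_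
    · calc P T ≤ P ((⋃ v ∈ K, Emax v) ∪ N) := measure_mono hTsubUN
        _ ≤ P (⋃ v ∈ K, Emax v) + P N := measure_union_le _ _
        _ = (K.card : ENNReal) * c := by rw [hNnull, add_zero, hPU]
    · rw [← hPU]
      exact measure_mono hUsubT
  -- conclude
  have hcardS : (Finset.univ : Finset ↥S).card = S.card := by
    rw [Finset.card_univ, Fintype.card_coe]
  have hS0 : (S.card : ENNReal) ≠ 0 := by
    simp only [ne_eq, Nat.cast_eq_zero, ← Finset.card_ne_zero]
    exact Finset.card_ne_zero_of_mem (hAS hA.choose_spec)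
  have hStop : (S.card : ENNReal) ≠ ⊤ := ENNReal.natCast_ne_top _
  have hcval : c = (S.card : ENNReal)⁻¹ := by
    rw [hcardS] at hsum1
    rw [← one_mul c, ← ENNReal.inv_mul_cancel hS0 hStop, mul_assoc, hsum1, mul_one]
  rw [hevent, ← htransport T hTmeas, hPT, hKcard, hcval, div_eq_mul_inv]
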